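/- Let N be even, and let A ∈ SU(N) be unitary with A = c J Ā J for a scalar c, where J is the standard symplectic form matrix. If either (N ≡ 0 mod 4 and c = e^{2πi/N}) or (N ≡ 2 mod 4 and c = 1), then no such A exists; i.e. the fixed-point set of the map A ↦ c J Ā J on SU(N) is empty in these cases. -/

import Mathlib

open Matrix

/-- The block-diagonal matrix `J = blockdiag(J₂, …, J₂)` with `J₂ = [[0,1],[-1,0]]`
(the standard symplectic form matrix), as an `N × N` complex matrix. -/
def blockJ (N : ℕ) : Matrix (Fin N) (Fin N) ℂ :=
  Matrix.of fun i j : Fin N =>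
    if (i : ℕ) % 2 = 0 ∧ (j : ℕ) = (i : ℕ) + 1 then (1 : ℂ)
    else if (i : ℕ) % 2 = 1 ∧ (i : ℕ) = (j : ℕ) + 1 then -1 else 0

open Polynomial

section AuxLemmas

lemma blockJ_mul_self (N : ℕ) (hNe : Even N) : blockJ N * blockJ N = -1 := by
  obtain ⟨m, hm⟩ := hNe
  ext i j
  rw [Matrix.mul_apply]
  have hRHS : (-1 : Matrix (Fin N) (Fin N) ℂ) i j = if (i : ℕ) = (j : ℕ) then -1 else 0 := by
    simp only [Matrix.neg_apply, Matrix.one_apply, ← Fin.ext_iff]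
    split_ifs <;> norm_num
  rw [hRHS]
  have hiN := i.isLt
  rcases Nat.even_or_odd (i : ℕ) with hi | hi
  · have hi2 : (i : ℕ) % 2 = 0 := Nat.even_iff.mp hi
    have hlt : (i : ℕ) + 1 < N := by omega
    rw [Finset.sum_eq_single (⟨(i : ℕ) + 1, hlt⟩ : Fin N)]
    · simp only [blockJ, Matrix.of_apply, Fin.val_mk, eq_self_iff_true, and_true, true_and]
      split_ifs <;> try norm_num
      all_goals (exfalso; omega)
    · intro k _ hk
      have hk' : (k : ℕ) ≠ (i : ℕ) + 1 := fun h => hk (Fin.ext h)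
      simp only [blockJ, Matrix.of_apply]
      split_ifs <;> try norm_num
      all_goals (exfalso; omega)
    · intro h; exact absurd (Finset.mem_univ _) h
  · have hi2 : (i : ℕ) % 2 = 1 := Nat.odd_iff.mp hi
    have hlt : (i : ℕ) - 1 < N := by omega
    rw [Finset.sum_eq_single (⟨(i : ℕ) - 1, hlt⟩ : Fin N)]
    · simp only [blockJ, Matrix.of_apply, Fin.val_mk, eq_self_iff_true, and_true, true_and]
      split_ifs <;> try norm_num
      all_goals (exfalso; omega)
    · intro k _ hk
      have hk' : (k : ℕ) ≠ (i : ℕ) - 1 := fun h => hk (Fin.ext h)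
      simp only [blockJ, Matrix.of_apply]
      split_ifs <;> try norm_num
      all_goals (exfalso; omega)
    · intro h; exact absurd (Finset.mem_univ _) h

lemma blockJ_map_conj (N : ℕ) : (blockJ N).map (starRingEnd ℂ) = blockJ N := by
  refine Matrix.ext fun i j => ?_
  simp only [blockJ, Matrix.map_apply, Matrix.of_apply]
  split_ifs <;> simp

lemma charpoly_comp_translate {N : ℕ} (M : Matrix (Fin N) (Fin N) ℂ) (t : ℂ) :
    M.charpoly.comp (X + C t) = (M - t • (1 : Matrix (Fin N) (Fin N) ℂ)).charpoly := by
  have hcomp : M.charpoly.comp (X + C t) = eval₂RingHom C (X + C t) M.charpoly := rfl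
  rw [hcomp, Matrix.charpoly, Matrix.charpoly, RingHom.map_det]
  congr 1
  refine Matrix.ext fun i j => ?_
  by_cases hij : i = j
  · subst hij
    simp only [RingHom.mapMatrix_apply, Matrix.map_apply, Matrix.charmatrix_apply,
      Matrix.diagonal_apply_eq, Matrix.sub_apply, Matrix.smul_apply, Matrix.one_apply_eq,
      smul_eq_mul, mul_one, eval₂_sub, eval₂_X, eval₂_C, coe_eval₂RingHom, C_sub]
    ring
  · simp only [RingHom.mapMatrix_apply, Matrix.map_apply, Matrix.charmatrix_apply,
      Matrix.diagonal_apply_ne _ hij, Matrix.sub_apply, Matrix.smul_apply,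
      Matrix.one_apply_ne hij, smul_eq_mul, mul_zero, eval₂_neg, eval₂_C,
      coe_eval₂RingHom, zero_sub, sub_zero]

lemma charpoly_toLin' {N : ℕ} (M : Matrix (Fin N) (Fin N) ℂ) :
    (Matrix.toLin' M).charpoly = M.charpoly := by
  rw [← LinearMap.charpoly_toMatrix (Matrix.toLin' M) (Pi.basisFun ℂ (Fin N)),
    LinearMap.toMatrix_eq_toMatrix', LinearMap.toMatrix'_toLin']

lemma charpoly_conj_eq {N : ℕ} (U V M : Matrix (Fin N) (Fin N) ℂ) (hUV : U * V = 1) :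
    (U * M * V).charpoly = M.charpoly := by
  have hchar : ∀ P : Matrix (Fin N) (Fin N) ℂ,
      Matrix.charmatrix P = Matrix.diagonal (fun _ => (X : ℂ[X])) - P.map (⇑(C : ℂ →+* ℂ[X])) := by
    intro P
    refine Matrix.ext fun i j => ?_
    simp [Matrix.charmatrix_apply, Matrix.sub_apply, Matrix.map_apply]
  have key : Matrix.charmatrix (U * M * V)
      = U.map (⇑(C : ℂ →+* ℂ[X])) * Matrix.charmatrix M * V.map (⇑(C : ℂ →+* ℂ[X])) := by
    rw [hchar, hchar]
    have hdiag : Matrix.diagonal (fun _ => (X : ℂ[X]))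
        = (X : ℂ[X]) • (1 : Matrix (Fin N) (Fin N) ℂ[X]) := by
      rw [Matrix.smul_one_eq_diagonal]
    rw [Matrix.mul_sub, Matrix.sub_mul, hdiag]
    rw [Matrix.mul_smul, Matrix.mul_one, Matrix.smul_mul]
    rw [← Matrix.map_mul, hUV, Matrix.map_one _ (map_zero _) (map_one _)]
    rw [← Matrix.map_mul, ← Matrix.map_mul]
  rw [Matrix.charpoly, Matrix.charpoly, key, Matrix.det_mul, Matrix.det_mul]
  have hdet : (U.map (⇑(C : ℂ →+* ℂ[X]))).det * (V.map (⇑(C : ℂ →+* ℂ[X]))).det = 1 := by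
    rw [← Matrix.det_mul, ← Matrix.map_mul, hUV, Matrix.map_one _ (map_zero _) (map_one _),
      Matrix.det_one]
  calc (U.map (⇑(C : ℂ →+* ℂ[X]))).det * (Matrix.charmatrix M).det
        * (V.map (⇑(C : ℂ →+* ℂ[X]))).det
      = (Matrix.charmatrix M).det * ((U.map (⇑(C : ℂ →+* ℂ[X]))).det
        * (V.map (⇑(C : ℂ →+* ℂ[X]))).det) := by ring
    _ = (Matrix.charmatrix M).det := by rw [hdet, mul_one]

lemma even_finrank_of_antilinear (W : Type*) [AddCommGroup W] [Module ℂ W] [Module ℝ W]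
    [IsScalarTower ℝ ℂ W] (j : W →ₗ[ℝ] W) (hj2 : ∀ x, j (j x) = -x)
    (hji : ∀ x, j (Complex.I • x) = -(Complex.I • j x)) :
    Even (Module.finrank ℂ W) := by
  let iE : Module.End ℝ W :=
    { toFun := fun w => Complex.I • w
      map_add' := fun _ _ => smul_add _ _ _
      map_smul' := fun r w => (smul_comm r Complex.I w).symm }
  let q : QuaternionAlgebra.Basis (Module.End ℝ W) (-1 : ℝ) (0 : ℝ) (-1 : ℝ) :=
    { i := iE
      j := j
      k := iE * j
      i_mul_i := by
        rw [zero_smul, add_zero]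
        ext w
        show Complex.I • Complex.I • w = ((-1 : ℝ) • (1 : Module.End ℝ W)) w
        rw [smul_smul, Complex.I_mul_I]
        show (-1 : ℂ) • w = (-1 : ℝ) • ((1 : Module.End ℝ W) w)
        rw [neg_one_smul, Module.End.one_apply, neg_one_smul]
      j_mul_j := by
        ext w
        show j (j w) = ((-1 : ℝ) • (1 : Module.End ℝ W)) w
        rw [hj2]
        show -w = (-1 : ℝ) • ((1 : Module.End ℝ W) w)
        rw [Module.End.one_apply, neg_one_smul]
      i_mul_j := rfl
      j_mul_i := by
        rw [zero_smul, zero_sub]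
        ext w
        show j (Complex.I • w) = (-(iE * j)) w
        rw [hji]
        rfl }
  let F := QuaternionAlgebra.lift q
  letI : Module (Quaternion ℝ) W :=
    Module.compHom W (F : Quaternion ℝ →ₐ[ℝ] Module.End ℝ W).toRingHom
  have hFsmul : ∀ (a : Quaternion ℝ) (w : W), a • w = F a w := fun _ _ => rfl
  haveI : IsScalarTower ℝ (Quaternion ℝ) W := by
    constructor
    intro r a w
    rw [hFsmul, hFsmul]
    exact congrArg (fun f : Module.End ℝ W => f w) (_root_.map_smul F r (a : QuaternionAlgebra ℝ (-1) 0 (-1)))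
  have h1 : Module.finrank ℝ ℂ * Module.finrank ℂ W = Module.finrank ℝ W :=
    Module.finrank_mul_finrank ℝ ℂ W
  have h2 : Module.finrank ℝ (Quaternion ℝ) * Module.finrank (Quaternion ℝ) W
      = Module.finrank ℝ W := Module.finrank_mul_finrank ℝ (Quaternion ℝ) W
  rw [Complex.finrank_real_complex] at h1
  rw [Quaternion.finrank_eq_four] at h2
  rw [Nat.even_iff]
  omega

lemma prod_nonneg_of_conj_invariant : ∀ (R : Multiset ℂ),
    R.map (starRingEnd ℂ) = R →
    (∀ t : ℂ, (starRingEnd ℂ) t = t → Even (R.count t)) →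
    ∃ r : ℝ, 0 ≤ r ∧ R.prod = (r : ℂ) := by
  classical
  intro R
  induction R using Multiset.strongInductionOn with
  | _ s ih =>
  intro h1 h2
  by_cases hs : s = 0
  · exact ⟨1, zero_le_one, by simp [hs]⟩
  obtain ⟨a, ha⟩ := Multiset.exists_mem_of_ne_zero hs
  have hinj : Function.Injective (starRingEnd ℂ) := star_injective
  by_cases hareal : (starRingEnd ℂ) a = a
  · have hcount := h2 a hareal
    have h1le : 0 < s.count a := Multiset.count_pos.mpr ha
    have h2le : 2 ≤ s.count a := by
      rcases hcount with ⟨k, hk⟩; omega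
    have ha2 : a ∈ s.erase a := by
      rw [← Multiset.count_pos, Multiset.count_erase_self]; omega
    have hcons : s = a ::ₘ a ::ₘ (s.erase a).erase a := by
      rw [Multiset.cons_erase ha2, Multiset.cons_erase ha]
    set s' := (s.erase a).erase a with hs'
    have h1' : s'.map (starRingEnd ℂ) = s' := by
      rw [hs', Multiset.map_erase _ hinj, Multiset.map_erase _ hinj, h1, hareal]
    have h2' : ∀ t : ℂ, (starRingEnd ℂ) t = t → Even (s'.count t) := by
      intro t htr
      have := h2 t htr
      by_cases hta : t = a
      · subst hta
        rw [hs', Multiset.count_erase_self, Multiset.count_erase_self]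
        rw [Nat.even_iff] at this ⊢
        omega
      · rw [hs', Multiset.count_erase_of_ne hta, Multiset.count_erase_of_ne hta]
        exact this
    have hlt : s' < s := by
      rw [hcons]
      calc s' < a ::ₘ s' := Multiset.lt_cons_self _ _
        _ < a ::ₘ a ::ₘ s' := Multiset.lt_cons_self _ _
    obtain ⟨r, hr0, hrprod⟩ := ih s' hlt h1' h2'
    refine ⟨a.re * a.re * r, mul_nonneg (mul_self_nonneg _) hr0, ?_⟩
    have haa : (a.re : ℂ) = a := Complex.conj_eq_iff_re.mp hareal
    rw [hcons, Multiset.prod_cons, Multiset.prod_cons, hrprod, ← haa]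
    push_cast [Complex.ofReal_re]
    ring
  · have hb : (starRingEnd ℂ) a ∈ s := by
      rw [← h1]; exact Multiset.mem_map_of_mem _ ha
    have hbne : (starRingEnd ℂ) a ≠ a := hareal
    have hbmem : (starRingEnd ℂ) a ∈ s.erase a := (Multiset.mem_erase_of_ne hbne).mpr hb
    set s' := (s.erase a).erase ((starRingEnd ℂ) a) with hs'
    have hcons : s = a ::ₘ (starRingEnd ℂ) a ::ₘ s' := by
      rw [hs', Multiset.cons_erase hbmem, Multiset.cons_erase ha]
    have h1' : s'.map (starRingEnd ℂ) = s' := by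
      rw [hs', Multiset.map_erase _ hinj, Multiset.map_erase _ hinj, h1, Complex.conj_conj,
        Multiset.erase_comm]
    have h2' : ∀ t : ℂ, (starRingEnd ℂ) t = t → Even (s'.count t) := by
      intro t htr
      have hta : t ≠ a := by
        rintro rfl; exact hareal htr
      have htb : t ≠ (starRingEnd ℂ) a := by
        rintro rfl
        exact hareal (by rw [← htr, Complex.conj_conj])
      rw [hs', Multiset.count_erase_of_ne htb, Multiset.count_erase_of_ne hta]
      exact h2 t htr
    have hlt : s' < s := by
      rw [hcons]
      calc s' < (starRingEnd ℂ) a ::ₘ s' := Multiset.lt_cons_self _ _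
        _ < a ::ₘ (starRingEnd ℂ) a ::ₘ s' := Multiset.lt_cons_self _ _
    obtain ⟨r, hr0, hrprod⟩ := ih s' hlt h1' h2'
    refine ⟨Complex.normSq a * r, mul_nonneg (Complex.normSq_nonneg _) hr0, ?_⟩
    rw [hcons, Multiset.prod_cons, Multiset.prod_cons, hrprod, ← mul_assoc,
      Complex.mul_conj]
    push_cast
    ring

lemma even_rootMultiplicity (N : ℕ) (hNe : Even N) (B : Matrix (Fin N) (Fin N) ℂ)
    (hB : B.map (starRingEnd ℂ) = -(blockJ N * B * blockJ N)) (t : ℂ)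
    (ht : (starRingEnd ℂ) t = t) :
    Even (Polynomial.rootMultiplicity t B.charpoly) := by
  have hJJ := blockJ_mul_self N hNe
  set J := blockJ N with hJdef
  have hJB : J * B.map (starRingEnd ℂ) = B * J := by
    rw [hB]
    calc J * -(J * B * J) = -(J * J * (B * J)) := by noncomm_ring
      _ = B * J := by rw [hJJ]; noncomm_ring
  rw [Polynomial.rootMultiplicity_eq_natTrailingDegree, charpoly_comp_translate,
    ← _root_.charpoly_toLin' (B - t • 1), ← LinearMap.finrank_maxGenEigenspace_zero_eq]
  set M := B - t • (1 : Matrix (Fin N) (Fin N) ℂ) with hM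
  set φ : Module.End ℂ (Fin N → ℂ) := Matrix.toLin' M with hφdef
  set V := Module.End.maxGenEigenspace φ 0 with hV
  set σ : (Fin N → ℂ) → (Fin N → ℂ) := fun x => J.mulVec (star x) with hσdef
  have hstar_mulVec : ∀ (P : Matrix (Fin N) (Fin N) ℂ) (v : Fin N → ℂ),
      star (P.mulVec v) = (P.map (starRingEnd ℂ)).mulVec (star v) := by
    intro P v
    funext i
    simp [Matrix.mulVec, dotProduct, star_sum, star_mul', Matrix.map_apply,
      Complex.star_def]
  have hMconj : M.map (starRingEnd ℂ)
      = B.map (starRingEnd ℂ) - t • (1 : Matrix (Fin N) (Fin N) ℂ) := by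
    refine Matrix.ext fun i j => ?_
    simp only [hM, Matrix.map_apply, Matrix.sub_apply, Matrix.smul_apply, Matrix.one_apply,
      map_sub, smul_eq_mul]
    congr 1
    rw [_root_.map_mul, ht]
    congr 1
    by_cases hij : i = j <;> simp [hij]
  have hJM : J * M.map (starRingEnd ℂ) = M * J := by
    rw [hMconj, hM, Matrix.mul_sub, Matrix.sub_mul, hJB]
    congr 1
    rw [Matrix.mul_smul, Matrix.mul_one, Matrix.smul_mul, Matrix.one_mul]
  have hσM : ∀ x, σ (M.mulVec x) = M.mulVec (σ x) := by
    intro x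
    show J.mulVec (star (M.mulVec x)) = M.mulVec (J.mulVec (star x))
    rw [hstar_mulVec, Matrix.mulVec_mulVec, hJM, ← Matrix.mulVec_mulVec]
  have hσ0 : σ 0 = 0 := by simp [hσdef]
  have hσadd : ∀ x y, σ (x + y) = σ x + σ y := by
    intro x y; simp [hσdef, star_add, Matrix.mulVec_add]
  have hσsmul : ∀ (a : ℂ) (x : Fin N → ℂ), σ (a • x) = (starRingEnd ℂ) a • σ x := by
    intro a x
    simp [hσdef, star_smul, Matrix.mulVec_smul, Complex.star_def]
  have hσσ : ∀ x, σ (σ x) = -x := by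
    intro x
    show J.mulVec (star (J.mulVec (star x))) = -x
    rw [hstar_mulVec, star_star, blockJ_map_conj, Matrix.mulVec_mulVec, hJJ,
      Matrix.neg_mulVec, Matrix.one_mulVec]
  have hφx : ∀ x, φ x = M.mulVec x := fun x => Matrix.toLin'_apply M x
  have hreal_smul : ∀ (r : ℝ) (x : Fin N → ℂ), r • x = (r : ℂ) • x := fun r x => by
    rw [← algebraMap_smul ℂ r x, Complex.coe_algebraMap]
  have hφpow : ∀ (k : ℕ) (x : Fin N → ℂ), σ ((φ ^ k) x) = (φ ^ k) (σ x) := by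
    intro k
    induction k with
    | zero => intro x; simp
    | succ n ihn =>
      intro x
      simp only [pow_succ, Module.End.mul_apply, hφx]
      rw [ihn, hσM]
  have hVinv : ∀ x ∈ V, σ x ∈ V := by
    intro x hx
    rw [hV, Module.End.mem_maxGenEigenspace] at hx ⊢
    obtain ⟨k, hk⟩ := hx
    refine ⟨k, ?_⟩
    simp only [zero_smul, sub_zero] at hk ⊢
    rw [← hφpow, hk, hσ0]
  let jW : ↥V →ₗ[ℝ] ↥V :=
    { toFun := fun v => ⟨σ ↑v, hVinv _ v.2⟩
      map_add' := by
        intro v w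
        apply Subtype.ext
        show σ ↑(v + w) = σ ↑v + σ ↑w
        rw [Submodule.coe_add, hσadd]
      map_smul' := by
        intro r v
        apply Subtype.ext
        show σ ↑(r • v) = r • σ ↑v
        rw [Submodule.coe_smul_of_tower, hreal_smul, hσsmul, Complex.conj_ofReal,
          ← hreal_smul] }
  have hj2 : ∀ v, jW (jW v) = -v := by
    intro v
    apply Subtype.ext
    show σ (σ ↑v) = ↑(-v)
    rw [hσσ]; rfl
  have hji : ∀ v, jW (Complex.I • v) = -(Complex.I • jW v) := by
    intro v
    apply Subtype.ext
    show σ ↑(Complex.I • v) = ↑(-(Complex.I • jW v))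
    rw [SetLike.val_smul, hσsmul, Complex.conj_I, neg_smul]
    rfl
  exact even_finrank_of_antilinear ↥V jW hj2 hji

end AuxLemmas

/-- For `N` even and a scalar `c` with either (`N ≡ 0 (mod 4)` and
`c = e^{2πi/N}`) or (`N ≡ 2 (mod 4)` and `c = 1`), there is no `A ∈ SU(N)` with
`A = c J Ā J`; i.e. the fixed-point set of `A ↦ c J Ā J` on `SU(N)` is empty. -/
theorem stmt_18 (N : ℕ) (hN : 0 < N) (hNe : Even N) (c : ℂ)
    (hc : (N % 4 = 0 ∧ c = Complex.exp (2 * Real.pi * Complex.I / N)) ∨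
          (N % 4 = 2 ∧ c = 1)) :
    ¬ ∃ A ∈ Matrix.specialUnitaryGroup (Fin N) ℂ,
        A = c • (blockJ N * A.map (starRingEnd ℂ) * blockJ N) := by
  rintro ⟨A, hASU, hA⟩
  have hdetA : A.det = 1 := (Matrix.mem_specialUnitaryGroup_iff.mp hASU).2
  have hN0 : (N : ℂ) ≠ 0 := Nat.cast_ne_zero.mpr hN.ne'
  obtain ⟨s, hs1, hs2⟩ : ∃ s : ℂ, (starRingEnd ℂ) s = -(s * c) ∧ s ^ N = -1 := by
    rcases hc with ⟨h4, hc1⟩ | ⟨h4, hc1⟩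
    · refine ⟨Complex.exp (-(Real.pi * Complex.I) / 2 - Real.pi * Complex.I / N), ?_, ?_⟩
      · calc (starRingEnd ℂ) (Complex.exp (-(Real.pi * Complex.I) / 2 - Real.pi * Complex.I / N))
            = Complex.exp ((starRingEnd ℂ) (-(↑Real.pi * Complex.I) / 2 - ↑Real.pi * Complex.I / ↑N)) :=
              (Complex.exp_conj _).symm
          _ = Complex.exp (↑Real.pi * Complex.I + (-(↑Real.pi * Complex.I) / 2
              - ↑Real.pi * Complex.I / ↑N + 2 * ↑Real.pi * Complex.I / ↑N)) := by
              congr 1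
              simp only [map_sub, map_div₀, map_neg, _root_.map_mul, Complex.conj_ofReal,
                Complex.conj_I, map_natCast, map_ofNat]
              ring
          _ = Complex.exp (↑Real.pi * Complex.I) * Complex.exp (-(↑Real.pi * Complex.I) / 2
              - ↑Real.pi * Complex.I / ↑N + 2 * ↑Real.pi * Complex.I / ↑N) := Complex.exp_add _ _
          _ = -(Complex.exp (-(Real.pi * Complex.I) / 2 - Real.pi * Complex.I / N) * c) := by
              rw [Complex.exp_pi_mul_I, hc1, ← Complex.exp_add]
              ring
      · rw [← Complex.exp_nat_mul]
        obtain ⟨m, hm⟩ : ∃ m, N = 4 * m := ⟨N / 4, by omega⟩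
        have hNc : (N : ℂ) = 4 * (m : ℂ) := by rw [hm]; push_cast; ring
        have harg : (N : ℂ) * (-(↑Real.pi * Complex.I) / 2 - ↑Real.pi * Complex.I / ↑N)
            = ((-(m : ℤ) : ℤ) : ℂ) * (2 * ↑Real.pi * Complex.I) + (-(↑Real.pi * Complex.I)) := by
          have hm0 : (m : ℂ) ≠ 0 := by
            have hm' : m ≠ 0 := by omega
            exact_mod_cast hm'
          field_simp [hNc, hm0]
          push_cast
          rw [hNc]; ring
        rw [harg, Complex.exp_add, Complex.exp_int_mul_two_pi_mul_I, one_mul,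
          Complex.exp_neg, Complex.exp_pi_mul_I]
        norm_num
    · refine ⟨-Complex.I, ?_, ?_⟩
      · rw [hc1, mul_one, map_neg, Complex.conj_I, neg_neg]
      · obtain ⟨k, hk⟩ : ∃ k, N = 2 * k := ⟨N / 2, by omega⟩
        have hkodd : Odd k := by rw [Nat.odd_iff]; omega
        have hsq : (-Complex.I) ^ 2 = -1 := by
          rw [neg_pow, Complex.I_sq]; norm_num
        rw [hk, pow_mul, hsq, hkodd.neg_one_pow]
  set B := s • A with hBdef
  have hJJ := blockJ_mul_self N hNe
  have hBdet : B.det = -1 := by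
    rw [hBdef, Matrix.det_smul, Fintype.card_fin, hdetA, mul_one, hs2]
  have hBJ : B.map (starRingEnd ℂ) = -(blockJ N * B * blockJ N) := by
    have hJAJ : blockJ N * A * blockJ N = c • A.map (starRingEnd ℂ) := by
      conv_lhs => rw [hA]
      rw [Matrix.mul_smul, Matrix.smul_mul]
      congr 1
      calc blockJ N * (blockJ N * A.map (starRingEnd ℂ) * blockJ N) * blockJ N
          = (blockJ N * blockJ N) * A.map (starRingEnd ℂ) * (blockJ N * blockJ N) := by
            noncomm_ring
        _ = A.map (starRingEnd ℂ) := by rw [hJJ]; noncomm_ring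
    have hmapsmul : (s • A).map (starRingEnd ℂ)
        = (starRingEnd ℂ) s • A.map (starRingEnd ℂ) := by
      refine Matrix.ext fun i j => ?_
      simp [Matrix.map_apply, Matrix.smul_apply, smul_eq_mul, _root_.map_mul]
    rw [hBdef, hmapsmul, hs1, Matrix.mul_smul, Matrix.smul_mul, hJAJ, smul_smul, ← neg_smul]
  have hsplits : B.charpoly.Splits := IsAlgClosed.splits _
  have hprod : B.charpoly.roots.prod = -1 := by
    rw [← Matrix.det_eq_prod_roots_charpoly, hBdet]
  have hpconj : B.charpoly.map (starRingEnd ℂ) = B.charpoly := by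
    rw [← Matrix.charpoly_map, hBJ]
    have hneg : -(blockJ N * B * blockJ N) = (-(blockJ N)) * B * blockJ N := by noncomm_ring
    rw [hneg]
    exact charpoly_conj_eq _ _ _ (by rw [neg_mul, hJJ, neg_neg])
  have hrootsinv : B.charpoly.roots.map (starRingEnd ℂ) = B.charpoly.roots := by
    have h := hsplits.roots_map (starRingEnd ℂ)
    rw [hpconj] at h
    exact h.symm
  have hcounts : ∀ t : ℂ, (starRingEnd ℂ) t = t → Even (B.charpoly.roots.count t) := by
    intro t ht
    rw [Polynomial.count_roots]
    exact even_rootMultiplicity N hNe B hBJ t ht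
  obtain ⟨r, hr0, hrprod⟩ := prod_nonneg_of_conj_invariant _ hrootsinv hcounts
  rw [hprod] at hrprod
  have hr : r = -1 := by exact_mod_cast hrprod.symm
  linarith
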